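/- arXiv:2310.17637 — 7 statements merged into one kernel-verified Lean document; each statement's English description precedes it below -/
import Mathlib

section
/- Let y = (m, E, C) be a state with C_i > 0 for all i and Z(y) > 0, and let G be a mass-conserving normal viscous flux (M(G) = 0). If β > β*(y, G), then both shifted states y + β⁻¹·G and y − β⁻¹·G lie in the admissible set 𝒢; moreover all of their concentration components are strictly positive and their density equals ρ(y). -/
open scoped BigOperators

namespace PaperStmt

noncomputable section

abbrev State (d ns : ℕ) : Type := (Fin d → ℝ) × ℝ × (Fin ns → ℝ)

variable {d ns : ℕ}

/-- Euclidean dot product of momentum-like vectors. -/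
def dotP (a b : Fin d → ℝ) : ℝ := ∑ k, a k * b k

/-- Squared Euclidean norm. -/
def normSq (a : Fin d → ℝ) : ℝ := ∑ k, a k ^ 2

/-- Density `ρ(y) = Σ_i W_i C_i`. -/
def rho (W : Fin ns → ℝ) (y : State d ns) : ℝ := ∑ i, W i * y.2.2 i

/-- Scaled shifted internal energy `Z(y) = ρ(y)·E − |m|²/2 − ρ(y)²·u0`. -/
def Z (W : Fin ns → ℝ) (u0 : ℝ) (y : State d ns) : ℝ :=
  rho W y * y.2.1 - normSq y.1 / 2 - rho W y ^ 2 * u0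

/-- The admissible set `𝒢`. -/
def Gset (W : Fin ns → ℝ) (u0 : ℝ) : Set (State d ns) :=
  {y | (∀ i, 0 ≤ y.2.2 i) ∧ 0 < rho W y ∧ 0 < Z W u0 y}

/-- Mass production of a normal viscous flux: `M(G) = Σ_i W_i G_{C,i}`. -/
def Mflux (W : Fin ns → ℝ) (G : State d ns) : ℝ := ∑ i, W i * G.2.2 i

/-- `b(y,G) = ρ(y)·G_E − m·G_m`. -/
def bCoef (W : Fin ns → ℝ) (y G : State d ns) : ℝ :=
  rho W y * G.2.1 - dotP y.1 G.1

/-- `β_T(y,G) = (|b| + √(b² + 2 Z(y) |G_m|²)) / (2 Z(y))`. -/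
def betaT (W : Fin ns → ℝ) (u0 : ℝ) (y G : State d ns) : ℝ :=
  (|bCoef W y G| + Real.sqrt (bCoef W y G ^ 2 + 2 * Z W u0 y * normSq G.1)) /
    (2 * Z W u0 y)

/-- `β*(y,G) = max{ max_i |G_{C,i}|/C_i , β_T(y,G) }`. -/
def betaStar (W : Fin ns → ℝ) (u0 : ℝ) (y G : State d ns) : ℝ :=
  max (⨆ i, |G.2.2 i| / y.2.2 i) (betaT W u0 y G)

lemma rho_shift (W : Fin ns → ℝ) (y G : State d ns) (c : ℝ) :
    rho W (y + c • G) = rho W y + c * Mflux W G := by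
  simp only [rho, Mflux, Prod.snd_add, Prod.smul_snd, Pi.add_apply, Pi.smul_apply, smul_eq_mul]
  rw [Finset.mul_sum, ← Finset.sum_add_distrib]
  exact Finset.sum_congr rfl fun i _ => by ring

lemma normSq_shift (a b : Fin d → ℝ) (c : ℝ) :
    normSq (a + c • b) = normSq a + 2 * c * dotP a b + c ^ 2 * normSq b := by
  simp only [normSq, dotP, Pi.add_apply, Pi.smul_apply, smul_eq_mul, Finset.mul_sum]
  rw [← Finset.sum_add_distrib, ← Finset.sum_add_distrib]
  exact Finset.sum_congr rfl fun k _ => by ring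

lemma Z_shift (W : Fin ns → ℝ) (u0 : ℝ) (y G : State d ns) (c : ℝ)
    (hM : Mflux W G = 0) :
    Z W u0 (y + c • G) = Z W u0 y + c * bCoef W y G - c ^ 2 * normSq G.1 / 2 := by
  have hr := rho_shift W y G c
  rw [hM, mul_zero, add_zero] at hr
  simp only [Z, bCoef]
  rw [show (y + c • G).1 = y.1 + c • G.1 from rfl, normSq_shift, hr,
    show (y + c • G).2.1 = y.2.1 + c * G.2.1 from rfl]
  ring

lemma key_shift (W : Fin ns → ℝ) (u0 : ℝ) (hW : ∀ i, 0 < W i)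
    (y G : State d ns) (hC : ∀ i, 0 < y.2.2 i) (hZ : 0 < Z W u0 y)
    (hM : Mflux W G = 0) (β : ℝ) (hβ : betaStar W u0 y G < β)
    (c : ℝ) (hc : |c| = β⁻¹) :
    (y + c • G) ∈ Gset W u0 ∧ (∀ i, 0 < (y + c • G).2.2 i) ∧
      rho W (y + c • G) = rho W y := by
  -- positivity of β
  have hbT : 0 ≤ betaT W u0 y G :=
    div_nonneg (add_nonneg (abs_nonneg _) (Real.sqrt_nonneg _)) (by linarith)
  have hβpos : 0 < β :=
    lt_of_le_of_lt (hbT.trans (le_max_right _ _)) hβ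
  -- concentrations
  have hconc : ∀ i, 0 < (y + c • G).2.2 i := by
    intro i
    have h1 : |G.2.2 i| / y.2.2 i ≤ ⨆ j, |G.2.2 j| / y.2.2 j :=
      le_ciSup (f := fun j => |G.2.2 j| / y.2.2 j)
        (Set.Finite.bddAbove (Set.finite_range _)) i
    have h2 : |G.2.2 i| / y.2.2 i < β :=
      lt_of_le_of_lt (h1.trans (le_max_left _ _)) hβ
    have h3 : |G.2.2 i| < β * y.2.2 i := (div_lt_iff₀ (hC i)).mp h2
    have h4 : |c * G.2.2 i| < y.2.2 i := by
      rw [abs_mul, hc]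
      rw [inv_mul_lt_iff₀ hβpos]
      exact h3
    have h5 : (y + c • G).2.2 i = y.2.2 i + c * G.2.2 i := rfl
    rw [h5]
    have := neg_abs_le (c * G.2.2 i)
    linarith
  -- density
  have hrho : rho W (y + c • G) = rho W y := by
    rw [rho_shift, hM, mul_zero, add_zero]
  have hrnonneg : 0 ≤ rho W y :=
    Finset.sum_nonneg fun i _ => (mul_pos (hW i) (hC i)).le
  have hnormSq : 0 ≤ normSq y.1 := Finset.sum_nonneg fun k _ => sq_nonneg _
  have hrhopos : 0 < rho W y := by
    rcases hrnonneg.lt_or_eq with h | h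
    · exact h
    · exfalso
      have hZ' : Z W u0 y = - normSq y.1 / 2 := by
        rw [Z, ← h]; ring
      rw [hZ'] at hZ
      linarith
  -- Z positivity
  have hZpos : 0 < Z W u0 (y + c • G) := by
    rw [Z_shift W u0 y G c hM]
    set b := bCoef W y G with hb
    set nG := normSq G.1 with hnG
    have hnG0 : 0 ≤ nG := Finset.sum_nonneg fun k _ => sq_nonneg _
    set s := Real.sqrt (b ^ 2 + 2 * Z W u0 y * nG) with hs
    have hs2 : s ^ 2 = b ^ 2 + 2 * Z W u0 y * nG :=
      Real.sq_sqrt (by positivity)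
    have hsabs : |b| ≤ s := by
      rw [← Real.sqrt_sq_eq_abs]
      exact Real.sqrt_le_sqrt (by nlinarith)
    have hbTlt : betaT W u0 y G < β := lt_of_le_of_lt (le_max_right _ _) hβ
    have hnum : |b| + s < 2 * Z W u0 y * β := by
      have := (div_lt_iff₀ (by linarith : (0:ℝ) < 2 * Z W u0 y)).mp hbTlt
      linarith
    have hq : 0 < Z W u0 y * β ^ 2 - |b| * β - nG / 2 := by
      have hprod : 0 < (2 * Z W u0 y * β - |b| - s) * (2 * Z W u0 y * β - |b| + s) := by
        apply mul_pos <;> nlinarith [abs_nonneg b]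
      nlinarith [sq_abs b, hs2, hZ, hprod]
    have hcb : -( |b| * β⁻¹) ≤ c * b := by
      have : |c * b| = β⁻¹ * |b| := by rw [abs_mul, hc]
      have h := neg_abs_le (c * b)
      rw [this] at h
      linarith [h]
    have hc2 : c ^ 2 = β⁻¹ ^ 2 := by rw [← sq_abs, hc]
    have hβinv : 0 < β⁻¹ := inv_pos.mpr hβpos
    have hZε : 0 < Z W u0 y - |b| * β⁻¹ - β⁻¹ ^ 2 * nG / 2 := by
      have hexp : Z W u0 y - |b| * β⁻¹ - β⁻¹ ^ 2 * nG / 2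
          = β⁻¹ ^ 2 * (Z W u0 y * β ^ 2 - |b| * β - nG / 2) := by
        field_simp
      rw [hexp]
      positivity
    rw [hc2]
    linarith
  exact ⟨⟨fun i => (hconc i).le, hrho ▸ hrhopos, hZpos⟩, hconc, hrho⟩
/-- Lemma on the positivity-preserving dissipation coefficient
(Lemma `beta-constraints`): if all concentrations of `y` are positive, `Z(y) > 0`,
`G` is a mass-conserving normal viscous flux, and `β > β*(y,G)`, then
`y ± β⁻¹ • G ∈ 𝒢`, with strictly positive concentrations and unchanged density. -/
theorem beta_constraints (W : Fin ns → ℝ) (u0 : ℝ) (hW : ∀ i, 0 < W i)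
    (y G : State d ns) (hC : ∀ i, 0 < y.2.2 i) (hZ : 0 < Z W u0 y)
    (hM : Mflux W G = 0) (β : ℝ) (hβ : betaStar W u0 y G < β) :
    ((y + β⁻¹ • G) ∈ Gset W u0 ∧ (y - β⁻¹ • G) ∈ Gset W u0) ∧
    (∀ i, 0 < (y + β⁻¹ • G).2.2 i ∧ 0 < (y - β⁻¹ • G).2.2 i) ∧
    (rho W (y + β⁻¹ • G) = rho W y ∧ rho W (y - β⁻¹ • G) = rho W y) := by
  have hbT : 0 ≤ betaT W u0 y G :=
    div_nonneg (add_nonneg (abs_nonneg _) (Real.sqrt_nonneg _)) (by linarith)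
  have hβpos : 0 < β := lt_of_le_of_lt (hbT.trans (le_max_right _ _)) hβ
  have hsub : y - β⁻¹ • G = y + (-β⁻¹) • G := by
    rw [neg_smul, ← sub_eq_add_neg]
  have hplus := key_shift W u0 hW y G hC hZ hM β hβ β⁻¹
    (abs_of_pos (inv_pos.mpr hβpos))
  have hminus := key_shift W u0 hW y G hC hZ hM β hβ (-β⁻¹)
    (by rw [abs_neg]; exact abs_of_pos (inv_pos.mpr hβpos))
  rw [← hsub] at hminus
  exact ⟨⟨hplus.1, hminus.1⟩, fun i => ⟨hplus.2.1 i, hminus.2.1 i⟩,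
    hplus.2.2, hminus.2.2⟩

end
end PaperStmt
end

section
/- The admissible set 𝒢 = { y = (m, E, C) : C_i ≥ 0 for all i, ρ(y) > 0, and Z(y) > 0 } is a convex subset of ℝ^d × ℝ × ℝ^{n_s}. -/
open scoped BigOperators

namespace PaperStmt

noncomputable section

variable {d ns : ℕ}

/-- the admissible set `𝒢` is a convex subset of the state space. -/
theorem Gset_convex (W : Fin ns → ℝ) (u0 : ℝ) (hW : ∀ i, 0 < W i) :
    Convex ℝ (Gset (d := d) W u0) := by
  rintro a ⟨haC, haR, haZ⟩ b ⟨hbC, hbR, hbZ⟩ s t hs ht hst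
  have hcomp2 : ∀ i, (s • a + t • b).2.2 i = s * a.2.2 i + t * b.2.2 i := by
    intro i; rfl
  have hcomp1 : ∀ k, (s • a + t • b).1 k = s * a.1 k + t * b.1 k := by
    intro k; rfl
  have hcompE : (s • a + t • b).2.1 = s * a.2.1 + t * b.2.1 := rfl
  have hrho : rho W (s • a + t • b) = s * rho W a + t * rho W b := by
    simp only [rho, hcomp2]
    rw [Finset.mul_sum, Finset.mul_sum, ← Finset.sum_add_distrib]
    exact Finset.sum_congr rfl fun i _ => by ring
  have hrpos : 0 < s * rho W a + t * rho W b := by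
    rcases lt_or_ge 0 s with h | h
    · have h1 := mul_pos h haR
      nlinarith [mul_nonneg ht hbR.le]
    · have hs0 : s = 0 := le_antisymm h hs
      have ht1 : t = 1 := by linarith
      simp [hs0, ht1, hbR]
  have hnorm : normSq (s • a + t • b).1
      = s ^ 2 * normSq a.1 + 2 * s * t * dotP a.1 b.1 + t ^ 2 * normSq b.1 := by
    simp only [normSq, dotP, hcomp1, Finset.mul_sum, ← Finset.sum_add_distrib]
    apply Finset.sum_congr rfl
    intro k _; ring
  have hCS : 0 ≤ rho W b ^ 2 * normSq a.1 - 2 * rho W a * rho W b * dotP a.1 b.1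
      + rho W a ^ 2 * normSq b.1 := by
    have h : rho W b ^ 2 * normSq a.1 - 2 * rho W a * rho W b * dotP a.1 b.1
        + rho W a ^ 2 * normSq b.1
        = ∑ k, (rho W b * a.1 k - rho W a * b.1 k) ^ 2 := by
      simp only [normSq, dotP, Finset.mul_sum, ← Finset.sum_sub_distrib,
        ← Finset.sum_add_distrib]
      apply Finset.sum_congr rfl
      intro k _; ring
    rw [h]
    exact Finset.sum_nonneg fun k _ => sq_nonneg _
  refine ⟨fun i => ?_, ?_, ?_⟩
  · rw [hcomp2]
    exact add_nonneg (mul_nonneg hs (haC i)) (mul_nonneg ht (hbC i))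
  · rw [hrho]; exact hrpos
  · have key : Z W u0 (s • a + t • b) * (rho W a * rho W b)
        = s * (s * rho W a + t * rho W b) * rho W b * Z W u0 a
        + t * (s * rho W a + t * rho W b) * rho W a * Z W u0 b
        + (s * t / 2) * (rho W b ^ 2 * normSq a.1
            - 2 * rho W a * rho W b * dotP a.1 b.1 + rho W a ^ 2 * normSq b.1) := by
      simp only [Z, hrho, hnorm, hcompE]
      have h1 : t = 1 - s := by linarith
      subst h1; ring
    have hRHS : 0 < Z W u0 (s • a + t • b) * (rho W a * rho W b) := by
      rw [key]
      rcases lt_or_ge 0 s with hs' | hs'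
      · have h1 : 0 < s * (s * rho W a + t * rho W b) * rho W b * Z W u0 a :=
          mul_pos (mul_pos (mul_pos hs' hrpos) hbR) haZ
        have h2 : 0 ≤ t * (s * rho W a + t * rho W b) * rho W a * Z W u0 b :=
          mul_nonneg (mul_nonneg (mul_nonneg ht hrpos.le) haR.le) hbZ.le
        nlinarith [mul_nonneg (mul_nonneg hs ht) hCS]
      · have hs0 : s = 0 := le_antisymm hs' hs
        have ht1 : t = 1 := by linarith
        subst hs0; subst ht1
        simpa using mul_pos (mul_pos hrpos haR) hbZ
    have := mul_pos haR hbR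
    nlinarith

end
end PaperStmt
end

section
/- Let y ∈ 𝒢 and neighbor states y_1, …, y_{n_f} ∈ 𝒢, and let Δt* > 0, |κ| > 0, face areas |∂κ^{(f)}| ≥ 0, and dissipation coefficients β_f > 0 satisfy Σ_{f=1}^{n_f} (Δt*·|∂κ^{(f)}| / (2|κ|))·β_f ≤ 1. Then the first-order (p = 0) Lax-Friedrichs-type viscous update y' = (1 − Σ_f (Δt*|∂κ^{(f)}|/(2|κ|))·β_f)·y + Σ_f (Δt*|∂κ^{(f)}|/(2|κ|))·β_f·y_f belongs to 𝒢. -/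
open scoped BigOperators

namespace PaperStmt

noncomputable section

variable {d ns : ℕ}

lemma convex_sum_mem_Gset (W : Fin ns → ℝ) (u0 : ℝ)
    {n : ℕ} (θ : Fin n → ℝ) (Y : Fin n → State d ns)
    (hθ : ∀ j, 0 ≤ θ j) (hθsum : ∑ j, θ j = 1)
    (hY : ∀ j, Y j ∈ Gset W u0) :
    (∑ j, θ j • Y j) ∈ Gset W u0 := by
  set S : State d ns := ∑ j, θ j • Y j with hS
  have hρ : ∀ j, 0 < rho W (Y j) := fun j => (hY j).2.1
  have hZ : ∀ j, 0 < Z W u0 (Y j) := fun j => (hY j).2.2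
  have hCn : ∀ j i, 0 ≤ (Y j).2.2 i := fun j => (hY j).1
  have hS1 : S.1 = ∑ j, θ j • (Y j).1 := by simp [hS, Prod.fst_sum]
  have hS21 : S.2.1 = ∑ j, θ j * (Y j).2.1 := by
    simp [hS, Prod.snd_sum, Prod.fst_sum, Prod.smul_fst, Prod.smul_snd, smul_eq_mul]
  have hS22 : ∀ i, S.2.2 i = ∑ j, θ j * (Y j).2.2 i := by
    intro i; simp [hS, Prod.snd_sum, Finset.sum_apply, smul_eq_mul]
  have hS1k : ∀ k, S.1 k = ∑ j, θ j * (Y j).1 k := by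
    intro k; rw [hS1]; simp [Finset.sum_apply, smul_eq_mul]
  have hrhoS : rho W S = ∑ j, θ j * rho W (Y j) := by
    simp only [rho, hS22, Finset.mul_sum]
    rw [Finset.sum_comm]
    exact Finset.sum_congr rfl fun j _ => Finset.sum_congr rfl fun i _ => by ring
  obtain ⟨j0, hj0⟩ : ∃ j, 0 < θ j := by
    by_contra h
    push_neg at h
    have : ∑ j, θ j = 0 := Finset.sum_eq_zero fun j _ => le_antisymm (h j) (hθ j)
    simp [this] at hθsum
  have hj0mem : j0 ∈ (Finset.univ : Finset (Fin n)) := Finset.mem_univ _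
  have hrhoSpos : 0 < rho W S := by
    rw [hrhoS]
    exact Finset.sum_pos' (fun j _ => mul_nonneg (hθ j) (hρ j).le)
      ⟨j0, hj0mem, mul_pos hj0 (hρ j0)⟩
  refine ⟨fun i => ?_, hrhoSpos, ?_⟩
  · rw [hS22]
    exact Finset.sum_nonneg fun j _ => mul_nonneg (hθ j) (hCn j i)
  have hApos : 0 < ∑ j, θ j * (Z W u0 (Y j) / rho W (Y j)) :=
    Finset.sum_pos' (fun j _ => mul_nonneg (hθ j) (div_nonneg (hZ j).le (hρ j).le))
      ⟨j0, hj0mem, mul_pos hj0 (div_pos (hZ j0) (hρ j0))⟩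
  have hCS : normSq S.1 ≤ rho W S * ∑ j, θ j * (normSq (Y j).1 / rho W (Y j)) := by
    have hk : ∀ k : Fin d, (∑ j, θ j * (Y j).1 k) ^ 2 ≤
        (∑ j, θ j * rho W (Y j)) * ∑ j, θ j * ((Y j).1 k ^ 2 / rho W (Y j)) := by
      intro k
      refine Finset.sum_sq_le_sum_mul_sum_of_sq_eq_mul _
        (fun j _ => mul_nonneg (hθ j) (hρ j).le)
        (fun j _ => mul_nonneg (hθ j) (div_nonneg (sq_nonneg _) (hρ j).le))
        (fun j _ => ?_)
      have h := (hρ j).ne'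
      field_simp
    calc normSq S.1 = ∑ k, (∑ j, θ j * (Y j).1 k) ^ 2 := by simp [normSq, hS1k]
      _ ≤ ∑ k : Fin d, (∑ j, θ j * rho W (Y j)) * ∑ j, θ j * ((Y j).1 k ^ 2 / rho W (Y j)) :=
          Finset.sum_le_sum fun k _ => hk k
      _ = rho W S * ∑ j, θ j * (normSq (Y j).1 / rho W (Y j)) := by
          rw [← Finset.mul_sum, hrhoS]
          congr 1
          rw [Finset.sum_comm]
          exact Finset.sum_congr rfl fun j _ => by
            simp [normSq, Finset.mul_sum, Finset.sum_div, mul_div_assoc]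
  have hmain : rho W S * ∑ j, θ j * (Z W u0 (Y j) / rho W (Y j)) ≤ Z W u0 S := by
    have hexp : ∑ j, θ j * (Z W u0 (Y j) / rho W (Y j))
        = (∑ j, θ j * (Y j).2.1) - (∑ j, θ j * (normSq (Y j).1 / rho W (Y j))) / 2
          - (∑ j, θ j * rho W (Y j)) * u0 := by
      rw [Finset.sum_mul, Finset.sum_div, ← Finset.sum_sub_distrib, ← Finset.sum_sub_distrib]
      refine Finset.sum_congr rfl fun j _ => ?_
      have h := (hρ j).ne'
      field_simp [Z]
      simp only [Z]; ring
    rw [hexp, Z, hrhoS, hS21]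
    have h2 : rho W S * ((∑ j, θ j * (normSq (Y j).1 / rho W (Y j))) / 2) ≥ normSq S.1 / 2 := by
      rw [ge_iff_le, div_le_iff₀ (by norm_num : (0:ℝ) < 2)] at *
      nlinarith [hCS]
    rw [hrhoS] at hCS hrhoSpos
    nlinarith [hCS]
  have : 0 < rho W S * ∑ j, θ j * (Z W u0 (Y j) / rho W (Y j)) :=
    mul_pos hrhoSpos hApos
  exact lt_of_lt_of_le this hmain


/-- the first-order (`p = 0`) Lax-Friedrichs-type viscous update is a
convex combination of admissible states and hence remains in `𝒢` under the stated
time-step-size constraint. -/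
theorem p0_viscous_update_in_G (W : Fin ns → ℝ) (u0 : ℝ) (hW : ∀ i, 0 < W i)
    {nf : ℕ} (y : State d ns) (hy : y ∈ Gset W u0)
    (yf : Fin nf → State d ns) (hyf : ∀ f, yf f ∈ Gset W u0)
    (Δt vol : ℝ) (hΔt : 0 < Δt) (hvol : 0 < vol)
    (area : Fin nf → ℝ) (harea : ∀ f, 0 ≤ area f)
    (β : Fin nf → ℝ) (hβ : ∀ f, 0 < β f)
    (hsum : ∑ f, Δt * area f / (2 * vol) * β f ≤ 1) :
    (1 - ∑ f, Δt * area f / (2 * vol) * β f) • y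
      + ∑ f, (Δt * area f / (2 * vol) * β f) • yf f ∈ Gset W u0 := by
  classical
  set c : Fin nf → ℝ := fun f => Δt * area f / (2 * vol) * β f with hc
  have hcnn : ∀ f, 0 ≤ c f := fun f =>
    mul_nonneg (div_nonneg (mul_nonneg hΔt.le (harea f)) (by positivity)) (hβ f).le
  set θ : Fin (nf + 1) → ℝ := Fin.cons (1 - ∑ f, c f) c with hθdef
  set Y : Fin (nf + 1) → State d ns := Fin.cons y yf with hYdef
  have hexpr : (1 - ∑ f, Δt * area f / (2 * vol) * β f) • y
      + ∑ f, (Δt * area f / (2 * vol) * β f) • yf f = ∑ j, θ j • Y j := by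
    rw [Fin.sum_univ_succ]
    simp [hθdef, hYdef, hc]
  rw [hexpr]
  refine convex_sum_mem_Gset W u0 θ Y ?_ ?_ ?_
  · intro j
    refine Fin.cases ?_ ?_ j
    · simpa [hθdef] using hsum
    · intro f; simpa [hθdef] using hcnn f
  · rw [Fin.sum_univ_succ]
    simp [hθdef]
  · intro j
    refine Fin.cases ?_ ?_ j
    · simpa [hYdef] using hy
    · intro f; simpa [hYdef] using hyf f


end
end PaperStmt
end

section
/- (One-dimensional high-order positivity theorem.) Fix n_q ≥ 1. Suppose given: interior quadrature states y_q ∈ 𝒢 for q = 1, …, n_q; interior trace states y_L, y_R ∈ 𝒢 and exterior (neighbor) trace states z_L, z_R ∈ 𝒢 at the left and right endpoints, each with all concentration components strictly positive; mass-conserving normal viscous fluxes G_L, G_R (evaluated from the interior traces) and H_L, H_R (evaluated from the exterior traces), where fluxes with subscript L (resp. R) have been contracted with the outward unit normal n = −1 (resp. n = +1); coefficients θ_q ≥ 0, θ_L > 0, θ_R > 0 with Σ_q θ_q + θ_L + θ_R = 1; dissipation coefficients β_L > max{β*(y_L, G_L), β*(z_L, H_L)} and β_R > max{β*(y_R, G_R),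 β*(z_R, H_R)}; and a ratio τ = Δt*/h > 0 with τ ≤ min{θ_L/β_L, θ_R/β_R}. Then the updated element average ȳ_v := Σ_q θ_q y_q + θ_L y_L + θ_R y_R + τ·[ (G_L + H_L)/2 + (G_R + H_R)/2 − (β_L/2)(y_L − z_L) − (β_R/2)(y_R − z_R) ] belongs to 𝒢. -/
open scoped BigOperators

namespace PaperStmt

noncomputable section

variable {d ns : ℕ}

-- component lemmas
lemma state_add_fst (y z : State d ns) : (y + z).1 = y.1 + z.1 := rfl
lemma state_add_E (y z : State d ns) : (y + z).2.1 = y.2.1 + z.2.1 := rfl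
lemma state_add_C (y z : State d ns) (i : Fin ns) : (y + z).2.2 i = y.2.2 i + z.2.2 i := rfl
lemma state_smul_fst (t : ℝ) (y : State d ns) : (t • y).1 = t • y.1 := rfl
lemma state_smul_E (t : ℝ) (y : State d ns) : (t • y).2.1 = t * y.2.1 := rfl
lemma state_smul_C (t : ℝ) (y : State d ns) (i : Fin ns) : (t • y).2.2 i = t * y.2.2 i := rfl

lemma normSq_nonneg (a : Fin d → ℝ) : 0 ≤ normSq a :=
  Finset.sum_nonneg fun _ _ => sq_nonneg _

lemma dotP_smul_right (t : ℝ) (a b : Fin d → ℝ) : dotP a (t • b) = t * dotP a b := by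
  simp only [dotP, Pi.smul_apply, smul_eq_mul, Finset.mul_sum]
  exact Finset.sum_congr rfl fun k _ => by ring

lemma normSq_add (a b : Fin d → ℝ) :
    normSq (a + b) = normSq a + 2 * dotP a b + normSq b := by
  simp only [normSq, dotP, Pi.add_apply, Finset.mul_sum, ← Finset.sum_add_distrib]
  exact Finset.sum_congr rfl fun k _ => by ring

lemma normSq_smul (t : ℝ) (a : Fin d → ℝ) : normSq (t • a) = t ^ 2 * normSq a := by
  simp only [normSq, Pi.smul_apply, smul_eq_mul, Finset.mul_sum]
  exact Finset.sum_congr rfl fun k _ => by ring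

lemma rho_add (W : Fin ns → ℝ) (y z : State d ns) :
    rho W (y + z) = rho W y + rho W z := by
  simp only [rho, state_add_C, mul_add, Finset.sum_add_distrib]

lemma rho_smul (W : Fin ns → ℝ) (t : ℝ) (y : State d ns) :
    rho W (t • y) = t * rho W y := by
  simp only [rho, state_smul_C, Finset.mul_sum]
  exact Finset.sum_congr rfl fun i _ => by ring

lemma Z_smul (W : Fin ns → ℝ) (u0 t : ℝ) (y : State d ns) :
    Z W u0 (t • y) = t ^ 2 * Z W u0 y := by
  simp only [Z, rho_smul, state_smul_E, state_smul_fst, normSq_smul]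
  ring

lemma cauchy (ρ1 ρ2 : ℝ) (m1 m2 : Fin d → ℝ) :
    0 ≤ ρ2 ^ 2 * normSq m1 - 2 * (ρ1 * ρ2) * dotP m1 m2 + ρ1 ^ 2 * normSq m2 := by
  have h : ρ2 ^ 2 * normSq m1 - 2 * (ρ1 * ρ2) * dotP m1 m2 + ρ1 ^ 2 * normSq m2
      = ∑ k, (ρ2 * m1 k - ρ1 * m2 k) ^ 2 := by
    simp only [normSq, dotP, Finset.mul_sum, ← Finset.sum_add_distrib,
      ← Finset.sum_sub_distrib]
    exact Finset.sum_congr rfl fun k _ => by ring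
  rw [h]
  exact Finset.sum_nonneg fun _ _ => sq_nonneg _

lemma Z_superadd (W : Fin ns → ℝ) (u0 : ℝ) (y z : State d ns)
    (hy : 0 < rho W y) (hz : 0 < rho W z)
    (hZy : 0 ≤ Z W u0 y) (hZz : 0 ≤ Z W u0 z) :
    Z W u0 y + Z W u0 z ≤ Z W u0 (y + z) := by
  have hc := cauchy (rho W y) (rho W z) y.1 z.1
  have hr := rho_add W y z
  have hn : normSq (y + z).1 = normSq y.1 + 2 * dotP y.1 z.1 + normSq z.1 := by
    rw [state_add_fst]; exact normSq_add _ _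
  simp only [Z] at hZy hZz ⊢
  rw [hr, hn, state_add_E]
  nlinarith [mul_nonneg (sq_nonneg (rho W y)) hZz, mul_nonneg (sq_nonneg (rho W z)) hZy,
    mul_pos hy hz, hc]

def Pw (W : Fin ns → ℝ) (u0 : ℝ) (y : State d ns) : Prop :=
  y = 0 ∨ ((∀ i, 0 ≤ y.2.2 i) ∧ 0 < rho W y ∧ 0 ≤ Z W u0 y)

lemma Pw_zero (W : Fin ns → ℝ) (u0 : ℝ) : Pw W u0 (0 : State d ns) := Or.inl rfl

lemma Gset_Pw {W : Fin ns → ℝ} {u0 : ℝ} {y : State d ns} (h : y ∈ Gset W u0) :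
    Pw W u0 y := Or.inr ⟨h.1, h.2.1, h.2.2.le⟩

lemma Pw_add {W : Fin ns → ℝ} {u0 : ℝ} {y z : State d ns}
    (hy : Pw W u0 y) (hz : Pw W u0 z) : Pw W u0 (y + z) := by
  rcases hy with rfl | ⟨hC, hρ, hZ⟩
  · rwa [zero_add]
  rcases hz with rfl | ⟨hC', hρ', hZ'⟩
  · rw [add_zero]; exact Or.inr ⟨hC, hρ, hZ⟩
  refine Or.inr ⟨fun i => ?_, ?_, ?_⟩
  · rw [state_add_C]; exact add_nonneg (hC i) (hC' i)
  · rw [rho_add]; linarith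
  · have := Z_superadd W u0 y z hρ hρ' hZ hZ'
    linarith

lemma Pw_add_Gset {W : Fin ns → ℝ} {u0 : ℝ} {y z : State d ns}
    (hy : Pw W u0 y) (hz : z ∈ Gset W u0) : y + z ∈ Gset W u0 := by
  obtain ⟨hC', hρ', hZ'⟩ := hz
  rcases hy with rfl | ⟨hC, hρ, hZ⟩
  · rw [zero_add]; exact ⟨hC', hρ', hZ'⟩
  refine ⟨fun i => ?_, ?_, ?_⟩
  · rw [state_add_C]; exact add_nonneg (hC i) (hC' i)
  · rw [rho_add]; linarith
  · have := Z_superadd W u0 y z hρ hρ' hZ hZ'.le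
    linarith

lemma Gset_smul {W : Fin ns → ℝ} {u0 : ℝ} {t : ℝ} (ht : 0 < t) {y : State d ns}
    (hy : y ∈ Gset W u0) : t • y ∈ Gset W u0 := by
  obtain ⟨hC, hρ, hZ⟩ := hy
  refine ⟨fun i => ?_, ?_, ?_⟩
  · rw [state_smul_C]; exact mul_nonneg ht.le (hC i)
  · rw [rho_smul]; exact mul_pos ht hρ
  · rw [Z_smul]; exact mul_pos (pow_pos ht 2) hZ

lemma Pw_smul {W : Fin ns → ℝ} {u0 : ℝ} {t : ℝ} (ht : 0 ≤ t) {y : State d ns}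
    (hy : y ∈ Gset W u0) : Pw W u0 (t • y) := by
  rcases ht.eq_or_lt with rfl | ht'
  · exact Or.inl (zero_smul ℝ y)
  · exact Gset_Pw (Gset_smul ht' hy)

lemma quad_pos (Zv b S β : ℝ) (hZ : 0 < Zv) (hβ : 0 < β) (hS : 0 ≤ S)
    (h : (|b| + Real.sqrt (b ^ 2 + 2 * Zv * S)) / (2 * Zv) < β) :
    0 < Zv + β⁻¹ * b - β⁻¹ ^ 2 * S / 2 := by
  have hD : 0 ≤ b ^ 2 + 2 * Zv * S := by positivity
  have h2Z : 0 < 2 * Zv := by linarith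
  rw [div_lt_iff₀ h2Z] at h
  have h5 : Real.sqrt (b ^ 2 + 2 * Zv * S) < 2 * Zv * β - |b| := by linarith
  have hsq : b ^ 2 + 2 * Zv * S < (2 * Zv * β - |b|) ^ 2 := by
    nlinarith [Real.sq_sqrt hD, Real.sqrt_nonneg (b ^ 2 + 2 * Zv * S)]
  have habs : (0 : ℝ) ≤ b + |b| := by linarith [neg_abs_le b]
  have h6 : 2 * Zv * S < 2 * Zv * (2 * Zv * β ^ 2 - 2 * β * |b|) := by nlinarith [hsq, sq_abs b]
  have h7 : S < 2 * Zv * β ^ 2 - 2 * β * |b| := lt_of_mul_lt_mul_left h6 h2Z.le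
  have hK : 0 < 2 * Zv * β ^ 2 + 2 * b * β - S := by
    nlinarith [h7, mul_nonneg hβ.le habs]
  have heq2 : Zv + β⁻¹ * b - β⁻¹ ^ 2 * S / 2
      = β⁻¹ ^ 2 / 2 * (2 * Zv * β ^ 2 + 2 * b * β - S) := by
    field_simp
  rw [heq2]
  positivity

lemma shift_mem (W : Fin ns → ℝ) (u0 : ℝ) {y G : State d ns} (hy : y ∈ Gset W u0)
    (hC : ∀ i, 0 < y.2.2 i) (hM : Mflux W G = 0) {β : ℝ} (hβ : 0 < β)
    (hβs : betaStar W u0 y G < β) : y + β⁻¹ • G ∈ Gset W u0 := by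
  obtain ⟨_, hρ, hZ⟩ := hy
  have hrG : rho W G = 0 := hM
  have hsup : (⨆ i, |G.2.2 i| / y.2.2 i) < β := (le_max_left _ _).trans_lt hβs
  have hbT : betaT W u0 y G < β := (le_max_right _ _).trans_lt hβs
  have e1 : rho W (y + β⁻¹ • G) = rho W y := by
    rw [rho_add, rho_smul, hrG, mul_zero, add_zero]
  refine ⟨fun i => ?_, ?_, ?_⟩
  · have h1 : |G.2.2 i| / y.2.2 i < β :=
      lt_of_le_of_lt
        (le_ciSup (f := fun j => |G.2.2 j| / y.2.2 j)
          (Set.Finite.bddAbove (Set.finite_range _)) i) hsup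
    have h2 : |G.2.2 i| < β * y.2.2 i := (div_lt_iff₀ (hC i)).mp h1
    have h3 := (abs_lt.mp h2).1
    rw [state_add_C, state_smul_C]
    have h4 : -(y.2.2 i) ≤ β⁻¹ * G.2.2 i := by
      rw [inv_mul_eq_div, le_div_iff₀ hβ]
      nlinarith
    linarith [hC i]
  · rw [e1]; exact hρ
  · have e2 : normSq (y + β⁻¹ • G).1
        = normSq y.1 + 2 * (β⁻¹ * dotP y.1 G.1) + (β⁻¹) ^ 2 * normSq G.1 := by
      rw [state_add_fst, state_smul_fst, normSq_add, dotP_smul_right, normSq_smul]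
    have hZeq : Z W u0 (y + β⁻¹ • G)
        = Z W u0 y + β⁻¹ * bCoef W y G - (β⁻¹) ^ 2 * normSq G.1 / 2 := by
      simp only [Z, e1, e2, state_add_E, state_smul_E, bCoef]
      ring
    rw [hZeq]
    have hbT' : (|bCoef W y G| + Real.sqrt (bCoef W y G ^ 2 + 2 * Z W u0 y * normSq G.1)) /
        (2 * Z W u0 y) < β := by rwa [betaT] at hbT
    exact quad_pos (Z W u0 y) (bCoef W y G) (normSq G.1) β hZ hβ (normSq_nonneg _) hbT'

/-- one-dimensional high-order positivity theorem
(Theorem `CFL-condition-1D-viscous`): under the time-step-size constraint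
`τ = Δt*/h ≤ min{θ_L/β_L, θ_R/β_R}`, the constraints on `β_L, β_R`, and the conditions
on the `θ`'s, the updated element average of the viscous contribution lies in `𝒢`. -/
theorem oneD_high_order_positivity (W : Fin ns → ℝ) (u0 : ℝ) (hW : ∀ i, 0 < W i)
    {nq : ℕ} (hnq : 1 ≤ nq)
    (yq : Fin nq → State d ns) (hyq : ∀ q, yq q ∈ Gset W u0)
    (yL yR zL zR : State d ns)
    (hyL : yL ∈ Gset W u0) (hyR : yR ∈ Gset W u0)
    (hzL : zL ∈ Gset W u0) (hzR : zR ∈ Gset W u0)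
    (hyLC : ∀ i, 0 < yL.2.2 i) (hyRC : ∀ i, 0 < yR.2.2 i)
    (hzLC : ∀ i, 0 < zL.2.2 i) (hzRC : ∀ i, 0 < zR.2.2 i)
    (Gl Gr Hl Hr : State d ns)
    (hGL : Mflux W Gl = 0) (hGR : Mflux W Gr = 0)
    (hHL : Mflux W Hl = 0) (hHR : Mflux W Hr = 0)
    (θq : Fin nq → ℝ) (hθq : ∀ q, 0 ≤ θq q)
    (θL θR : ℝ) (hθL : 0 < θL) (hθR : 0 < θR)
    (hθsum : (∑ q, θq q) + θL + θR = 1)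
    (βL βR : ℝ)
    (hβL : max (betaStar W u0 yL Gl) (betaStar W u0 zL Hl) < βL)
    (hβR : max (betaStar W u0 yR Gr) (betaStar W u0 zR Hr) < βR)
    (τ : ℝ) (hτ : 0 < τ) (hτle : τ ≤ min (θL / βL) (θR / βR)) :
    (∑ q, θq q • yq q) + θL • yL + θR • yR
      + τ • ((2:ℝ)⁻¹ • (Gl + Hl) + (2:ℝ)⁻¹ • (Gr + Hr)
          - (βL / 2) • (yL - zL) - (βR / 2) • (yR - zR)) ∈ Gset W u0 := by
  have hτL : τ ≤ θL / βL := hτle.trans (min_le_left _ _)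
  have hτR : τ ≤ θR / βR := hτle.trans (min_le_right _ _)
  have hβLpos : 0 < βL := by
    by_contra h
    push_neg at h
    have : θL / βL ≤ 0 := div_nonpos_iff.mpr (Or.inl ⟨hθL.le, h⟩)
    linarith
  have hβRpos : 0 < βR := by
    by_contra h
    push_neg at h
    have : θR / βR ≤ 0 := div_nonpos_iff.mpr (Or.inl ⟨hθR.le, h⟩)
    linarith
  have hτβL : τ * βL ≤ θL := (le_div_iff₀ hβLpos).mp hτL
  have hτβR : τ * βR ≤ θR := (le_div_iff₀ hβRpos).mp hτR
  have hsL1 : betaStar W u0 yL Gl < βL := (le_max_left _ _).trans_lt hβL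
  have hsL2 : betaStar W u0 zL Hl < βL := (le_max_right _ _).trans_lt hβL
  have hsR1 : betaStar W u0 yR Gr < βR := (le_max_left _ _).trans_lt hβR
  have hsR2 : betaStar W u0 zR Hr < βR := (le_max_right _ _).trans_lt hβR
  have m1 : yL + βL⁻¹ • Gl ∈ Gset W u0 := shift_mem W u0 hyL hyLC hGL hβLpos hsL1
  have m2 : zL + βL⁻¹ • Hl ∈ Gset W u0 := shift_mem W u0 hzL hzLC hHL hβLpos hsL2
  have m3 : yR + βR⁻¹ • Gr ∈ Gset W u0 := shift_mem W u0 hyR hyRC hGR hβRpos hsR1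
  have m4 : zR + βR⁻¹ • Hr ∈ Gset W u0 := shift_mem W u0 hzR hzRC hHR hβRpos hsR2
  have ht2 : 0 < τ * βL / 2 := by positivity
  have ht2R : 0 < τ * βR / 2 := by positivity
  have hrest : Pw W u0 ((∑ q, θq q • yq q) + (θL - τ * βL) • yL + (θR - τ * βR) • yR
      + (τ * βL / 2) • (zL + βL⁻¹ • Hl) + (τ * βR / 2) • (yR + βR⁻¹ • Gr)
      + (τ * βR / 2) • (zR + βR⁻¹ • Hr)) := by
    refine Pw_add (Pw_add (Pw_add (Pw_add (Pw_add ?_ ?_) ?_) ?_) ?_) ?_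
    · exact Finset.sum_induction _ (Pw W u0) (fun a b ha hb => Pw_add ha hb)
        (Pw_zero W u0) (fun q _ => Pw_smul (hθq q) (hyq q))
    · exact Pw_smul (by linarith) hyL
    · exact Pw_smul (by linarith) hyR
    · exact Pw_smul ht2.le m2
    · exact Pw_smul ht2R.le m3
    · exact Pw_smul ht2R.le m4
  have h1 : βL ≠ 0 := hβLpos.ne'
  have h2 : βR ≠ 0 := hβRpos.ne'
  have heq : (∑ q, θq q • yq q) + θL • yL + θR • yR
      + τ • ((2:ℝ)⁻¹ • (Gl + Hl) + (2:ℝ)⁻¹ • (Gr + Hr)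
          - (βL / 2) • (yL - zL) - (βR / 2) • (yR - zR))
      = ((∑ q, θq q • yq q) + (θL - τ * βL) • yL + (θR - τ * βR) • yR
      + (τ * βL / 2) • (zL + βL⁻¹ • Hl) + (τ * βR / 2) • (yR + βR⁻¹ • Gr)
      + (τ * βR / 2) • (zR + βR⁻¹ • Hr)) + (τ * βL / 2) • (yL + βL⁻¹ • Gl) := by
    match_scalars <;> field_simp <;> ring
  rw [heq]
  exact Pw_add_Gset hrest (Gset_smul ht2 m1)


end
end PaperStmt
end

section
/- (Multidimensional high-order positivity theorem.) For faces f = 1, …, n_f and surface points l = 1, …, n_{q,f}, suppose given: interior quadrature states y_q ∈ 𝒢 (q = 1, …, n_q); interior trace states y_{f,l} ∈ 𝒢 and exterior (neighbor) trace states z_{f,l} ∈ 𝒢, each with all concentration components strictly positive; mass-conserving normal viscous fluxes G_{f,l} (from the interior traces) and H_{f,l} (from the exterior traces), each already contracted with the outward unit normal of the element; surface weights ν_{f,l} ≥ 0; coefficients θ_q ≥ 0 and θ_{f,l} > 0 with Σ_q θ_q + Σ_{f,l} θ_{f,l} = 1; dissipation coefficients β_{f,l} > max{β*(y_{f,l},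 G_{f,l}), β*(z_{f,l}, H_{f,l})}; and a ratio τ = Δt*/|κ| > 0 satisfying τ·β_{f,l}·ν_{f,l} ≤ θ_{f,l} for all f, l. Then the updated element average ȳ_v := Σ_q θ_q y_q + Σ_{f,l} θ_{f,l} y_{f,l} + τ·Σ_{f,l} ν_{f,l}·[ (G_{f,l} + H_{f,l})/2 − (β_{f,l}/2)(y_{f,l} − z_{f,l}) ] belongs to 𝒢. -/
open scoped BigOperators

namespace PaperStmt

noncomputable section

variable {d ns : ℕ}

lemma betaT_nonneg (W : Fin ns → ℝ) (u0 : ℝ) (y g : State d ns) (hZ : 0 < Z W u0 y) :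
    0 ≤ betaT W u0 y g := by
  apply div_nonneg (by positivity) (by linarith)

lemma rho_add_smul (W : Fin ns → ℝ) (y g : State d ns) (c : ℝ) :
    rho W (y + c • g) = rho W y + c * Mflux W g := by
  simp only [rho, Mflux, Finset.mul_sum]
  rw [← Finset.sum_add_distrib]
  exact Finset.sum_congr rfl fun i _ => by show W i * (y.2.2 i + c * g.2.2 i) = _; ring

lemma normSq_add_smul (m g : Fin d → ℝ) (c : ℝ) :
    normSq (m + c • g) = normSq m + 2*c*dotP m g + c^2 * normSq g := by
  simp only [normSq, dotP, Finset.mul_sum, ← Finset.sum_add_distrib]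
  exact Finset.sum_congr rfl fun k _ => by
    show (m k + c * g k)^2 = _; ring

lemma Z_add_smul (W : Fin ns → ℝ) (u0 : ℝ) (y g : State d ns) (c : ℝ)
    (hM : Mflux W g = 0) :
    Z W u0 (y + c • g) = Z W u0 y + c * bCoef W y g - c^2 * normSq g.1 / 2 := by
  have h1 : rho W (y + c • g) = rho W y := by rw [rho_add_smul, hM]; ring
  have h2 : (y + c • g).1 = y.1 + c • g.1 := rfl
  have h3 : (y + c • g).2.1 = y.2.1 + c * g.2.1 := rfl
  rw [Z, h1, h2, h3, normSq_add_smul, Z, bCoef]; ring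

/-- Key lemma: shifting an admissible state by `b⁻¹ • g` stays admissible. -/
lemma flux_mem (W : Fin ns → ℝ) (u0 : ℝ) {y g : State d ns}
    (hy : y ∈ Gset W u0) (hC : ∀ i, 0 < y.2.2 i) (hM : Mflux W g = 0)
    {b : ℝ} (hb : betaStar W u0 y g < b) : y + b⁻¹ • g ∈ Gset W u0 := by
  obtain ⟨-, hρ, hZ⟩ := hy
  have hb0 : 0 < b :=
    lt_of_le_of_lt (le_trans (betaT_nonneg W u0 y g hZ) (le_max_right _ _)) hb
  have hCpos : ∀ i, 0 < (y + b⁻¹ • g).2.2 i := by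
    intro i
    have h1 : |g.2.2 i| / y.2.2 i ≤ ⨆ j, |g.2.2 j| / y.2.2 j :=
      le_ciSup (f := fun j => |g.2.2 j| / y.2.2 j) (Set.Finite.bddAbove (Set.finite_range _)) i
    have h2 : |g.2.2 i| / y.2.2 i < b := lt_of_le_of_lt (le_trans h1 (le_max_left _ _)) hb
    have h3 : |g.2.2 i| < b * y.2.2 i := (div_lt_iff₀ (hC i)).mp h2
    have h4 : 0 < b * y.2.2 i + g.2.2 i := by
      have := neg_abs_le (g.2.2 i); linarith
    show 0 < y.2.2 i + b⁻¹ * g.2.2 i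
    have : y.2.2 i + b⁻¹ * g.2.2 i = b⁻¹ * (b * y.2.2 i + g.2.2 i) := by
      field_simp
    rw [this]; exact mul_pos (inv_pos.2 hb0) h4
  refine ⟨fun i => (hCpos i).le, ?_, ?_⟩
  · rw [rho_add_smul, hM]; simpa using hρ
  · have hβT : betaT W u0 y g < b := lt_of_le_of_lt (le_max_right _ _) hb
    set bb := bCoef W y g with hbb
    set n := normSq g.1 with hn
    have hn0 : 0 ≤ n := normSq_nonneg _
    set s := Real.sqrt (bb^2 + 2 * Z W u0 y * n) with hs
    have hs0 : 0 ≤ s := Real.sqrt_nonneg _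
    have hs2 : s^2 = bb^2 + 2 * Z W u0 y * n := Real.sq_sqrt (by positivity)
    have h5 : |bb| + s < 2 * Z W u0 y * b := by
      have := (div_lt_iff₀ (by linarith : (0:ℝ) < 2 * Z W u0 y)).mp hβT
      linarith
    have h6 : s < 2 * Z W u0 y * b - |bb| := by linarith
    have h7 : s * s < (2 * Z W u0 y * b - |bb|) * (2 * Z W u0 y * b - |bb|) :=
      mul_self_lt_mul_self hs0 h6
    have key : 0 < Z W u0 y * b^2 + b * bb - n / 2 := by
      nlinarith [neg_abs_le bb, sq_abs bb, hZ, hb0, abs_nonneg bb,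
        mul_pos hZ hb0, mul_nonneg hb0.le (abs_nonneg bb)]
    rw [Z_add_smul W u0 y g b⁻¹ hM]
    have : Z W u0 y + b⁻¹ * bb - (b⁻¹)^2 * n / 2
        = (Z W u0 y * b^2 + b * bb - n/2) / b^2 := by
      field_simp
    rw [this]
    exact div_pos key (by positivity)

/-- Cauchy–Schwarz step: `|Σ λ m|² ≤ (Σ λρ)(Σ λ|m|²/ρ)`. -/
lemma cs_aux {ι : Type*} [Fintype ι] (lam ρ' : ι → ℝ) (m : ι → Fin d → ℝ)
    (hlam : ∀ j, 0 ≤ lam j) (hρ : ∀ j, 0 < ρ' j) :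
    normSq (fun k => ∑ j, lam j * m j k)
      ≤ (∑ j, lam j * ρ' j) * ∑ j, lam j * normSq (m j) / ρ' j := by
  have hk : ∀ k : Fin d, (∑ j, lam j * m j k)^2
      ≤ (∑ j, lam j * ρ' j) * ∑ j, lam j * (m j k)^2 / ρ' j := by
    intro k
    have := Finset.sum_mul_sq_le_sq_mul_sq Finset.univ
      (fun j => Real.sqrt (lam j * ρ' j))
      (fun j => Real.sqrt (lam j / ρ' j) * m j k)
    have e1 : ∀ j : ι, Real.sqrt (lam j * ρ' j) * (Real.sqrt (lam j / ρ' j) * m j k)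
        = lam j * m j k := by
      intro j
      rw [← mul_assoc, ← Real.sqrt_mul (mul_nonneg (hlam j) (hρ j).le)]
      have h : lam j * ρ' j * (lam j / ρ' j) = (lam j)^2 := by
        field_simp [(hρ j).ne']
      rw [h, Real.sqrt_sq (hlam j)]
    have e2 : ∀ j : ι, Real.sqrt (lam j * ρ' j) ^ 2 = lam j * ρ' j := fun j =>
      Real.sq_sqrt (mul_nonneg (hlam j) (hρ j).le)
    have e3 : ∀ j : ι, (Real.sqrt (lam j / ρ' j) * m j k) ^ 2
        = lam j * (m j k)^2 / ρ' j := by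
      intro j
      rw [mul_pow, Real.sq_sqrt (div_nonneg (hlam j) (hρ j).le)]
      ring
    simp only [e1, e2, e3] at this
    exact this
  calc normSq (fun k => ∑ j, lam j * m j k)
      ≤ ∑ k, (∑ j, lam j * ρ' j) * ∑ j, lam j * (m j k)^2 / ρ' j :=
        Finset.sum_le_sum fun k _ => hk k
    _ = (∑ j, lam j * ρ' j) * ∑ j, lam j * normSq (m j) / ρ' j := by
        rw [← Finset.mul_sum, Finset.sum_comm]
        congr 1
        refine Finset.sum_congr rfl fun j _ => ?_
        rw [normSq, Finset.mul_sum, Finset.sum_div]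

/-- Convexity: a convex combination of admissible states is admissible. -/
lemma convex_mem {ι : Type*} [Fintype ι] (W : Fin ns → ℝ) (u0 : ℝ)
    (lam : ι → ℝ) (hlam : ∀ j, 0 ≤ lam j) (hsum : ∑ j, lam j = 1)
    (w : ι → State d ns) (hw : ∀ j, w j ∈ Gset W u0) :
    (∑ j, lam j • w j) ∈ Gset W u0 := by
  classical
  set S := ∑ j, lam j • w j with hS
  have hSC : ∀ i, S.2.2 i = ∑ j, lam j * (w j).2.2 i := by
    intro i
    rw [hS, Prod.snd_sum, Prod.snd_sum, Finset.sum_apply]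
    rfl
  have hSE : S.2.1 = ∑ j, lam j * (w j).2.1 := by
    rw [hS, Prod.snd_sum, Prod.fst_sum]; rfl
  have hSm : ∀ k, S.1 k = ∑ j, lam j * (w j).1 k := by
    intro k
    rw [hS, Prod.fst_sum, Finset.sum_apply]; rfl
  have hrho : rho W S = ∑ j, lam j * rho W (w j) := by
    simp only [rho, hSC, Finset.mul_sum]
    rw [Finset.sum_comm]
    exact Finset.sum_congr rfl fun j _ => Finset.sum_congr rfl fun i _ => by ring
  have hj0 : ∃ j, 0 < lam j := by
    by_contra h
    push_neg at h
    have : ∑ j : ι, lam j = 0 :=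
      Finset.sum_eq_zero fun j _ => le_antisymm (h j) (hlam j)
    rw [this] at hsum; norm_num at hsum
  obtain ⟨j0, hj0⟩ := hj0
  have hρj : ∀ j, 0 < rho W (w j) := fun j => (hw j).2.1
  have hρS : 0 < rho W S := by
    rw [hrho]
    exact Finset.sum_pos' (fun j _ => mul_nonneg (hlam j) (hρj j).le)
      ⟨j0, Finset.mem_univ j0, mul_pos hj0 (hρj j0)⟩
  refine ⟨fun i => ?_, hρS, ?_⟩
  · rw [hSC]
    exact Finset.sum_nonneg fun j _ => mul_nonneg (hlam j) ((hw j).1 i)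
  · -- Z positivity via concavity of Z/ρ
    have hterm : ∀ j : ι, lam j * (Z W u0 (w j) / rho W (w j))
        = lam j * (w j).2.1 - lam j * normSq (w j).1 / (2 * rho W (w j))
          - (lam j * rho W (w j)) * u0 := by
      intro j
      have h := (hρj j).ne'
      field_simp [Z]
      rw [Z]; ring
    have hpos : 0 < ∑ j, lam j * (Z W u0 (w j) / rho W (w j)) :=
      Finset.sum_pos' (fun j _ => mul_nonneg (hlam j)
          (div_nonneg (hw j).2.2.le (hρj j).le))
        ⟨j0, Finset.mem_univ j0, mul_pos hj0 (div_pos (hw j0).2.2 (hρj j0))⟩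
    have hcs : normSq S.1 ≤ rho W S * ∑ j, lam j * normSq ((w j).1) / rho W (w j) := by
      have h1 : S.1 = fun k => ∑ j, lam j * (w j).1 k := funext hSm
      rw [h1, hrho]
      exact cs_aux lam (fun j => rho W (w j)) (fun j => (w j).1) hlam hρj
    have hZge : Z W u0 S ≥ rho W S * ∑ j, lam j * (Z W u0 (w j) / rho W (w j)) := by
      have hexp : ∑ j, lam j * (Z W u0 (w j) / rho W (w j))
          = S.2.1 - (∑ j, lam j * normSq ((w j).1) / rho W (w j)) / 2 - rho W S * u0 := by
        rw [hSE, hrho]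
        simp only [hterm]
        rw [Finset.sum_sub_distrib, Finset.sum_sub_distrib, ← Finset.sum_mul]
        congr 1
        congr 1
        rw [Finset.sum_div]
        refine Finset.sum_congr rfl fun j _ => ?_
        rw [eq_div_iff (two_ne_zero)]
        field_simp
      rw [Z, hexp]
      nlinarith [hρS, hcs]
    calc (0:ℝ) < rho W S * ∑ j, lam j * (Z W u0 (w j) / rho W (w j)) :=
          mul_pos hρS hpos
      _ ≤ Z W u0 S := hZge

lemma sigma_sum {nf : ℕ} (nql : Fin nf → ℕ) {M : Type*} [AddCommMonoid M]
    (F : ((f : Fin nf) × Fin (nql f)) → M) :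
    ∑ p : (f : Fin nf) × Fin (nql f), F p = ∑ f, ∑ l, F ⟨f, l⟩ := by
  rw [← Finset.univ_sigma_univ, Finset.sum_sigma]

/-- multidimensional high-order positivity theorem
(Theorem `CFL-condition-2D-viscous`): under the time-step-size constraint
`τ·β_{f,l}·ν_{f,l} ≤ θ_{f,l}`, the constraints on the dissipation coefficients, and the
conditions on the `θ`'s, the updated element average of the viscous contribution lies
in `𝒢`. -/
theorem multiD_high_order_positivity (W : Fin ns → ℝ) (u0 : ℝ) (hW : ∀ i, 0 < W i)
    {nq nf : ℕ} (nql : Fin nf → ℕ)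
    (yq : Fin nq → State d ns) (hyq : ∀ q, yq q ∈ Gset W u0)
    (ytr ztr : ∀ f : Fin nf, Fin (nql f) → State d ns)
    (hytr : ∀ f l, ytr f l ∈ Gset W u0) (hztr : ∀ f l, ztr f l ∈ Gset W u0)
    (hytrC : ∀ f l i, 0 < (ytr f l).2.2 i) (hztrC : ∀ f l i, 0 < (ztr f l).2.2 i)
    (G H : ∀ f : Fin nf, Fin (nql f) → State d ns)
    (hG : ∀ f l, Mflux W (G f l) = 0) (hH : ∀ f l, Mflux W (H f l) = 0)
    (ν : ∀ f : Fin nf, Fin (nql f) → ℝ) (hν : ∀ f l, 0 ≤ ν f l)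
    (θq : Fin nq → ℝ) (hθq : ∀ q, 0 ≤ θq q)
    (θfl : ∀ f : Fin nf, Fin (nql f) → ℝ) (hθfl : ∀ f l, 0 < θfl f l)
    (hθsum : (∑ q, θq q) + (∑ f, ∑ l, θfl f l) = 1)
    (β : ∀ f : Fin nf, Fin (nql f) → ℝ)
    (hβ : ∀ f l,
      max (betaStar W u0 (ytr f l) (G f l)) (betaStar W u0 (ztr f l) (H f l)) < β f l)
    (τ : ℝ) (hτ : 0 < τ) (hτle : ∀ f l, τ * β f l * ν f l ≤ θfl f l) :
    (∑ q, θq q • yq q) + (∑ f, ∑ l, θfl f l • ytr f l)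
      + τ • (∑ f, ∑ l, ν f l •
          ((2:ℝ)⁻¹ • (G f l + H f l) - (β f l / 2) • (ytr f l - ztr f l)))
      ∈ Gset W u0 := by
  classical
  have hb0 : ∀ f l, 0 < β f l := by
    intro f l
    refine lt_of_le_of_lt ?_ (hβ f l)
    refine le_trans ?_ (le_max_left _ _)
    exact le_trans (betaT_nonneg W u0 (ytr f l) (G f l) (hytr f l).2.2)
      (le_max_right _ _)
  set lam : Fin nq ⊕ (((f : Fin nf) × Fin (nql f)) ⊕ (((f : Fin nf) × Fin (nql f)) ⊕ ((f : Fin nf) × Fin (nql f)))) → ℝ :=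
    Sum.elim θq (Sum.elim (fun p => θfl p.1 p.2 - τ * β p.1 p.2 * ν p.1 p.2)
      (Sum.elim (fun p => τ * β p.1 p.2 * ν p.1 p.2 / 2)
        (fun p => τ * β p.1 p.2 * ν p.1 p.2 / 2))) with hlamdef
  set w : Fin nq ⊕ (((f : Fin nf) × Fin (nql f)) ⊕ (((f : Fin nf) × Fin (nql f)) ⊕ ((f : Fin nf) × Fin (nql f)))) → State d ns :=
    Sum.elim yq (Sum.elim (fun p => ytr p.1 p.2)
      (Sum.elim (fun p => ytr p.1 p.2 + (β p.1 p.2)⁻¹ • G p.1 p.2)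
        (fun p => ztr p.1 p.2 + (β p.1 p.2)⁻¹ • H p.1 p.2))) with hwdef
  have hlam : ∀ j, 0 ≤ lam j := by
    rintro (q | p | p | p) <;>
      simp only [hlamdef, Sum.elim_inl, Sum.elim_inr]
    · exact hθq q
    · linarith [hτle p.1 p.2]
    · have := mul_nonneg (mul_nonneg hτ.le (hb0 p.1 p.2).le) (hν p.1 p.2); linarith
    · have := mul_nonneg (mul_nonneg hτ.le (hb0 p.1 p.2).le) (hν p.1 p.2); linarith
  have hsum : ∑ j, lam j = 1 := by
    rw [Fintype.sum_sum_type, Fintype.sum_sum_type, Fintype.sum_sum_type]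
    simp only [hlamdef, Sum.elim_inl, Sum.elim_inr]
    simp only [sigma_sum]
    have hmerge : (∑ f, ∑ l, (θfl f l - τ * β f l * ν f l))
        + ((∑ f, ∑ l, τ * β f l * ν f l / 2) + (∑ f, ∑ l, τ * β f l * ν f l / 2))
        = ∑ f, ∑ l, θfl f l := by
      rw [← Finset.sum_add_distrib, ← Finset.sum_add_distrib]
      refine Finset.sum_congr rfl fun f _ => ?_
      rw [← Finset.sum_add_distrib, ← Finset.sum_add_distrib]
      exact Finset.sum_congr rfl fun l _ => by ring
    linarith [hmerge, hθsum]
  have hw : ∀ j, w j ∈ Gset W u0 := by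
    rintro (q | p | p | p) <;>
      simp only [hwdef, Sum.elim_inl, Sum.elim_inr]
    · exact hyq q
    · exact hytr p.1 p.2
    · exact flux_mem W u0 (hytr p.1 p.2) (hytrC p.1 p.2) (hG p.1 p.2)
        (lt_of_le_of_lt (le_max_left _ _) (hβ p.1 p.2))
    · exact flux_mem W u0 (hztr p.1 p.2) (hztrC p.1 p.2) (hH p.1 p.2)
        (lt_of_le_of_lt (le_max_right _ _) (hβ p.1 p.2))
  have hmain := convex_mem W u0 lam hlam hsum w hw
  have hEq : (∑ j, lam j • w j) =
      (∑ q, θq q • yq q) + (∑ f, ∑ l, θfl f l • ytr f l)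
      + τ • (∑ f, ∑ l, ν f l •
          ((2:ℝ)⁻¹ • (G f l + H f l) - (β f l / 2) • (ytr f l - ztr f l))) := by
    rw [Fintype.sum_sum_type, Fintype.sum_sum_type, Fintype.sum_sum_type]
    simp only [hlamdef, hwdef, Sum.elim_inl, Sum.elim_inr]
    simp only [sigma_sum]
    rw [Finset.smul_sum]
    simp only [Finset.smul_sum]
    rw [add_assoc]
    congr 1
    have hmerge : ∀ f, (∑ l, θfl f l • ytr f l) + (∑ l, τ • (ν f l •
          ((2:ℝ)⁻¹ • (G f l + H f l) - (β f l / 2) • (ytr f l - ztr f l))))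
        = (∑ l, (θfl f l - τ * β f l * ν f l) • ytr f l)
          + ((∑ l, (τ * β f l * ν f l / 2) • (ytr f l + (β f l)⁻¹ • G f l))
            + (∑ l, (τ * β f l * ν f l / 2) • (ztr f l + (β f l)⁻¹ • H f l))) := by
      intro f
      rw [← Finset.sum_add_distrib, ← Finset.sum_add_distrib, ← Finset.sum_add_distrib]
      refine Finset.sum_congr rfl fun l _ => ?_
      have hβne : β f l ≠ 0 := (hb0 f l).ne'
      match_scalars <;> field_simp <;> ring
    calc (∑ f, ∑ l, (θfl f l - τ * β f l * ν f l) • ytr f l)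
          + ((∑ f, ∑ l, (τ * β f l * ν f l / 2) • (ytr f l + (β f l)⁻¹ • G f l))
            + (∑ f, ∑ l, (τ * β f l * ν f l / 2) • (ztr f l + (β f l)⁻¹ • H f l)))
        = ∑ f, ((∑ l, (θfl f l - τ * β f l * ν f l) • ytr f l)
          + ((∑ l, (τ * β f l * ν f l / 2) • (ytr f l + (β f l)⁻¹ • G f l))
            + (∑ l, (τ * β f l * ν f l / 2) • (ztr f l + (β f l)⁻¹ • H f l)))) := by
          rw [← Finset.sum_add_distrib, ← Finset.sum_add_distrib]
      _ = ∑ f, ((∑ l, θfl f l • ytr f l) + (∑ l, τ • (ν f l •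
          ((2:ℝ)⁻¹ • (G f l + H f l) - (β f l / 2) • (ytr f l - ztr f l))))) := by
          exact Finset.sum_congr rfl fun f _ => (hmerge f).symm
      _ = (∑ f, ∑ l, θfl f l • ytr f l) + ∑ f, ∑ l, τ • (ν f l •
          ((2:ℝ)⁻¹ • (G f l + H f l) - (β f l / 2) • (ytr f l - ztr f l))) := by
          rw [Finset.sum_add_distrib]
  rw [hEq] at hmain
  exact hmain
end
end PaperStmt
end

section
/- Let y = (m, E, C) be a state with C_i > 0 for all i and Z(y) > 0, and let Δy ∈ ℝ^d × ℝ × ℝ^{n_s} be any perturbation. If α > α*(y, Δy), then the state y − α⁻¹·Δy lies in the admissible set 𝒢; moreover all of its concentration components are strictly positive. -/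
open scoped BigOperators

namespace PaperStmt

noncomputable section

variable {d ns : ℕ}

/-- `b(y,Δy) = −E·M(Δy) − ρ(y)·ΔE + m·Δm + 2 ρ(y) u0 M(Δy)` for a perturbation `Δy`. -/
def bPert (W : Fin ns → ℝ) (u0 : ℝ) (y dy : State d ns) : ℝ :=
  -(y.2.1 * Mflux W dy) - rho W y * dy.2.1 + dotP y.1 dy.1
    + 2 * rho W y * u0 * Mflux W dy

/-- `g(y,Δy) = M(Δy)·ΔE − |Δm|²/2 − u0·M(Δy)²`. -/
def gPert (W : Fin ns → ℝ) (u0 : ℝ) (dy : State d ns) : ℝ :=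
  Mflux W dy * dy.2.1 - normSq dy.1 / 2 - u0 * Mflux W dy ^ 2

/-- `α_T(y,Δy) = (−b + √(b² − 4 Z(y) g)) / (2 Z(y))` when the discriminant is
nonnegative, and `0` otherwise. -/
def alphaT (W : Fin ns → ℝ) (u0 : ℝ) (y dy : State d ns) : ℝ :=
  if 0 ≤ bPert W u0 y dy ^ 2 - 4 * Z W u0 y * gPert W u0 dy then
    (-bPert W u0 y dy
        + Real.sqrt (bPert W u0 y dy ^ 2 - 4 * Z W u0 y * gPert W u0 dy)) /
      (2 * Z W u0 y)
  else 0

/-- `α*(y,Δy) = max{ max_i ΔC_i/C_i , α_T(y,Δy), 0 }`. -/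
def alphaStar (W : Fin ns → ℝ) (u0 : ℝ) (y dy : State d ns) : ℝ :=
  max (⨆ i, dy.2.2 i / y.2.2 i) (max (alphaT W u0 y dy) 0)

lemma snd_snd_sub_smul (y dy : State d ns) (c : ℝ) (i : Fin ns) :
    (y - c • dy).2.2 i = y.2.2 i - c * dy.2.2 i := by
  simp [Prod.smul_snd, Prod.snd_sub, Pi.sub_apply]

lemma rho_sub_smul (W : Fin ns → ℝ) (y dy : State d ns) (c : ℝ) :
    rho W (y - c • dy) = rho W y - c * Mflux W dy := by
  simp [rho, Mflux, mul_sub, Finset.sum_sub_distrib, Finset.mul_sum, mul_left_comm]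

lemma normSq_sub_smul (y dy : State d ns) (c : ℝ) :
    normSq (y - c • dy).1 = normSq y.1 - 2*c*dotP y.1 dy.1 + c^2 * normSq dy.1 := by
  simp only [normSq, dotP, Prod.fst_sub, Prod.smul_fst, Pi.sub_apply, Pi.smul_apply,
    smul_eq_mul, sub_sq, Finset.sum_add_distrib, Finset.sum_sub_distrib, Finset.mul_sum,
    mul_pow]
  simp only [← Finset.sum_sub_distrib, ← Finset.sum_add_distrib]
  exact Finset.sum_congr rfl fun k _ => by ring

lemma Z_sub_smul (W : Fin ns → ℝ) (u0 : ℝ) (y dy : State d ns) (c : ℝ) :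
    Z W u0 (y - c • dy)
      = Z W u0 y + c * bPert W u0 y dy + c^2 * gPert W u0 dy := by
  have h3 : (y - c • dy).2.1 = y.2.1 - c * dy.2.1 := rfl
  unfold Z bPert gPert
  rw [rho_sub_smul, normSq_sub_smul, h3]
  ring

/-- (Lemma `alpha-constraints`) if all concentrations of `y` are positive,
`Z(y) > 0`, and `α > α*(y,Δy)`, then `y − α⁻¹·Δy ∈ 𝒢`, with strictly positive
concentration components. -/
theorem alpha_constraints (W : Fin ns → ℝ) (u0 : ℝ) (hW : ∀ i, 0 < W i)
    (y dy : State d ns) (hC : ∀ i, 0 < y.2.2 i) (hZ : 0 < Z W u0 y)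
    (α : ℝ) (hα : alphaStar W u0 y dy < α) :
    (y - α⁻¹ • dy) ∈ Gset W u0 ∧ ∀ i, 0 < (y - α⁻¹ • dy).2.2 i := by
  have hα0 : 0 < α :=
    lt_of_le_of_lt ((le_max_right _ _).trans (le_max_right _ _)) hα
  have hαinv : 0 < α⁻¹ := inv_pos.mpr hα0
  -- positivity of new concentrations
  have hC' : ∀ i, 0 < (y - α⁻¹ • dy).2.2 i := by
    intro i
    have hbdd : BddAbove (Set.range fun j => dy.2.2 j / y.2.2 j) :=
      Set.Finite.bddAbove (Set.finite_range _)
    have hsup : dy.2.2 i / y.2.2 i < α :=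
      lt_of_le_of_lt ((le_ciSup hbdd i).trans (le_max_left _ _)) hα
    have h1 : dy.2.2 i < α * y.2.2 i := (div_lt_iff₀ (hC i)).mp hsup
    rw [snd_snd_sub_smul]
    have : α⁻¹ * dy.2.2 i < α⁻¹ * (α * y.2.2 i) := by
      exact mul_lt_mul_of_pos_left h1 hαinv
    rw [← mul_assoc, inv_mul_cancel₀ (ne_of_gt hα0), one_mul] at this
    linarith
  -- ns must be positive, otherwise Z(y) ≤ 0
  have hns : 0 < ns := by
    by_contra h
    have hns0 : ns = 0 := Nat.eq_zero_of_not_pos h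
    subst hns0
    have hrho : rho W y = 0 := by simp [rho]
    have hnn : 0 ≤ normSq y.1 := Finset.sum_nonneg fun k _ => sq_nonneg _
    rw [Z, hrho] at hZ
    nlinarith
  have hrho' : 0 < rho W (y - α⁻¹ • dy) := by
    rw [rho]
    have : Nonempty (Fin ns) := Fin.pos_iff_nonempty.mp hns
    exact Finset.sum_pos (fun i _ => mul_pos (hW i) (hC' i)) Finset.univ_nonempty
  -- positivity of Z
  set b := bPert W u0 y dy with hb
  set g := gPert W u0 dy with hg
  set Zy := Z W u0 y with hZy
  have hαT : alphaT W u0 y dy < α :=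
    lt_of_le_of_lt ((le_max_left _ _).trans (le_max_right _ _)) hα
  have key : 0 < Zy * α^2 + b * α + g := by
    by_cases hdisc : 0 ≤ b^2 - 4 * Zy * g
    · rw [alphaT, if_pos hdisc] at hαT
      have h2Z : 0 < 2 * Zy := by linarith
      have := (div_lt_iff₀ h2Z).mp hαT
      have hs0 : 0 ≤ Real.sqrt (b^2 - 4 * Zy * g) := Real.sqrt_nonneg _
      have hsq : Real.sqrt (b^2 - 4 * Zy * g) ^ 2 = b^2 - 4 * Zy * g :=
        Real.sq_sqrt hdisc
      nlinarith [this, hs0, hsq]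
    · push_neg at hdisc
      nlinarith [sq_nonneg (2 * Zy * α + b)]
  have hZ' : 0 < Z W u0 (y - α⁻¹ • dy) := by
    rw [Z_sub_smul, ← hb, ← hg, ← hZy]
    have hfac : Zy + α⁻¹ * b + (α⁻¹)^2 * g
        = (Zy * α^2 + b * α + g) * (α⁻¹)^2 := by
      field_simp
    rw [hfac]
    exact mul_pos key (by positivity)
  exact ⟨⟨fun i => (hC' i).le, hrho', hZ'⟩, hC'⟩


end
end PaperStmt
end

section
/- (Linear-scaling limiter for the shifted internal energy.) Let y_1, …, y_N be states with ρ(y_x) > 0 and C-components C_i ≥ 0 for all x and i, let ȳ be a state with ρ(ȳ) > 0, and let ε ∈ ℝ satisfy ρu*(ȳ) > ε. Set m* = min_{1 ≤ x ≤ N} ρu*(y_x) and suppose m* ≤ ε. Define ω = (ρu*(ȳ) − ε) / (ρu*(ȳ) − m*). Then ω ∈ [0, 1], and for every x the limited state ȳ + ω·(y_x − ȳ) satisfies ρ > 0 and ρu* ≥ ε. -/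
open scoped BigOperators

namespace PaperStmt

noncomputable section

variable {d ns : ℕ}

/-- Shifted internal energy density `ρu*(y) = E − |m|²/(2ρ(y)) − ρ(y)·u0`. -/
def rhoUstar (W : Fin ns → ℝ) (u0 : ℝ) (y : State d ns) : ℝ :=
  y.2.1 - normSq y.1 / (2 * rho W y) - rho W y * u0

private lemma sq_div_convex (a b p q l m : ℝ) (hl : 0 ≤ l) (hm : 0 ≤ m)
    (hp : 0 < p) (hq : 0 < q) (hpq : 0 < l * p + m * q) :
    (l * a + m * b) ^ 2 / (l * p + m * q) ≤ l * (a ^ 2 / p) + m * (b ^ 2 / q) := by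
  rw [div_le_iff₀ hpq]
  have h : l * (a ^ 2 / p) + m * (b ^ 2 / q) = (l * a ^ 2 * q + m * b ^ 2 * p) / (p * q) := by
    field_simp
  rw [h, div_mul_eq_mul_div, le_div_iff₀ (mul_pos hp hq)]
  nlinarith [mul_nonneg (mul_nonneg hl hm) (sq_nonneg (a * q - b * p))]

private lemma comb_pos {α β : ℝ} (ω : ℝ) (hω0 : 0 ≤ ω) (hω1 : ω ≤ 1)
    (ha : 0 < α) (hb : 0 < β) : 0 < (1 - ω) * α + ω * β := by
  rcases eq_or_lt_of_le hω0 with h | h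
  · simp [← h, ha]
  · have := mul_pos h hb
    nlinarith [mul_nonneg (by linarith : (0:ℝ) ≤ 1 - ω) ha.le]

private lemma rho_comb (W : Fin ns → ℝ) (ω : ℝ) (a b : State d ns) :
    rho W (a + ω • (b - a)) = (1 - ω) * rho W a + ω * rho W b := by
  simp only [rho]
  have h : ∀ i ∈ Finset.univ, W i * (a + ω • (b - a)).2.2 i
      = (1 - ω) * (W i * a.2.2 i) + ω * (W i * b.2.2 i) := by
    intro i _
    show W i * (a.2.2 i + ω * (b.2.2 i - a.2.2 i)) = _
    ring
  rw [Finset.sum_congr rfl h, Finset.sum_add_distrib, ← Finset.mul_sum, ← Finset.mul_sum]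

private lemma concave_step (W : Fin ns → ℝ) (u0 ω : ℝ) (hω0 : 0 ≤ ω) (hω1 : ω ≤ 1)
    (a b : State d ns) (ha : 0 < rho W a) (hb : 0 < rho W b) :
    (1 - ω) * rhoUstar W u0 a + ω * rhoUstar W u0 b
      ≤ rhoUstar W u0 (a + ω • (b - a)) := by
  have hc : 0 < (1 - ω) * rho W a + ω * rho W b := comb_pos ω hω0 hω1 ha hb
  have hrc := rho_comb W ω a b
  have hE : (a + ω • (b - a)).2.1 = a.2.1 + ω * (b.2.1 - a.2.1) := rfl
  have hkey : normSq ((a + ω • (b - a)).1) / (2 * ((1 - ω) * rho W a + ω * rho W b))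
      ≤ (1 - ω) * (normSq a.1 / (2 * rho W a)) + ω * (normSq b.1 / (2 * rho W b)) := by
    have h1 : normSq ((a + ω • (b - a)).1) / (2 * ((1 - ω) * rho W a + ω * rho W b))
        = ∑ k, ((1 - ω) * a.1 k + ω * b.1 k) ^ 2
            / ((1 - ω) * (2 * rho W a) + ω * (2 * rho W b)) := by
      rw [normSq, Finset.sum_div]
      refine Finset.sum_congr rfl fun k _ => ?_
      have : (a + ω • (b - a)).1 k = (1 - ω) * a.1 k + ω * b.1 k := by
        show a.1 k + ω * (b.1 k - a.1 k) = _
        ring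
      rw [this]
      ring_nf
    rw [h1]
    have h2 : (1 - ω) * (normSq a.1 / (2 * rho W a)) + ω * (normSq b.1 / (2 * rho W b))
        = ∑ k, ((1 - ω) * (a.1 k ^ 2 / (2 * rho W a)) + ω * (b.1 k ^ 2 / (2 * rho W b))) := by
      rw [Finset.sum_add_distrib, normSq, normSq, Finset.sum_div, Finset.sum_div,
        Finset.mul_sum, Finset.mul_sum]
    rw [h2]
    refine Finset.sum_le_sum fun k _ => ?_
    exact sq_div_convex (a.1 k) (b.1 k) (2 * rho W a) (2 * rho W b) (1 - ω) ω
      (by linarith) hω0 (by linarith) (by linarith) (by nlinarith)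
  simp only [rhoUstar, hrc, hE]
  nlinarith [hkey]

/-- the linear-scaling limiter for the shifted internal energy: the
scaling factor `ω = (ρu*(ȳ) − ε)/(ρu*(ȳ) − m*)` lies in `[0,1]` and every limited state
`ȳ + ω·(y_x − ȳ)` satisfies `ρ > 0` and `ρu* ≥ ε`. -/
theorem linear_scaling_limiter (W : Fin ns → ℝ) (u0 : ℝ) (hW : ∀ i, 0 < W i)
    {N : ℕ} (hN : 0 < N) (y : Fin N → State d ns)
    (hρ : ∀ x, 0 < rho W (y x)) (hC : ∀ x i, 0 ≤ (y x).2.2 i)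
    (ybar : State d ns) (hρbar : 0 < rho W ybar)
    (ε : ℝ) (hε : ε < rhoUstar W u0 ybar)
    (mstar : ℝ) (hm : mstar = ⨅ x, rhoUstar W u0 (y x)) (hmε : mstar ≤ ε)
    (ω : ℝ) (hω : ω = (rhoUstar W u0 ybar - ε) / (rhoUstar W u0 ybar - mstar)) :
    ω ∈ Set.Icc (0:ℝ) 1 ∧
    ∀ x, 0 < rho W (ybar + ω • (y x - ybar)) ∧
      ε ≤ rhoUstar W u0 (ybar + ω • (y x - ybar)) := by
  have hden : 0 < rhoUstar W u0 ybar - mstar := by linarith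
  have hnum : 0 ≤ rhoUstar W u0 ybar - ε := by linarith
  have hω0 : 0 ≤ ω := by rw [hω]; positivity
  have hω1 : ω ≤ 1 := by
    rw [hω, div_le_one hden]; linarith
  have hωeq : ω * (rhoUstar W u0 ybar - mstar) = rhoUstar W u0 ybar - ε := by
    rw [hω]; field_simp
  refine ⟨⟨hω0, hω1⟩, fun x => ?_⟩
  have hmx : mstar ≤ rhoUstar W u0 (y x) := by
    rw [hm]; exact ciInf_le (Set.Finite.bddBelow (Set.finite_range _)) x
  constructor
  · rw [rho_comb]
    exact comb_pos ω hω0 hω1 hρbar (hρ x)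
  · have h1 := concave_step W u0 ω hω0 hω1 ybar (y x) hρbar (hρ x)
    nlinarith [mul_le_mul_of_nonneg_left hmx hω0]


end
end PaperStmt
end
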